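/- The Kendall distance on S_n is a semimetric of negative type: for every m ≥ 2, all permutations σ_1,…,σ_m ∈ S_n and all real numbers α_1,…,α_m with α_1 + ⋯ + α_m = 0, one has Σ_{i=1}^m Σ_{j=1}^m α_i α_j d(σ_i, σ_j) ≤ 0. -/

import Mathlib

/-- The Kendall (tau) distance between two permutations of `Fin n`:
the number of pairs `(x, y)` with `x < y` on which `σ⁻¹` and `τ⁻¹`
disagree in relative order. -/
def kendallDist {n : ℕ} (σ τ : Equiv.Perm (Fin n)) : ℕ :=
  (Finset.univ.filter (fun p : Fin n × Fin n =>
    p.1 < p.2 ∧ ¬((σ⁻¹ p.1 < σ⁻¹ p.2) ↔ (τ⁻¹ p.1 < τ⁻¹ p.2)))).card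

/-- The top-`k` partial ranking determined by the items `a 0, …, a (k-1)`:
the set of full rankings (permutations) `σ` with `σ i = a i` for the first
`k` positions. -/
def topkFinset {n k : ℕ} (hk : k ≤ n) (a : Fin k → Fin n) :
    Finset (Equiv.Perm (Fin n)) :=
  Finset.univ.filter fun σ => ∀ i : Fin k, σ (Fin.castLE hk i) = a i

/-- The permutation of `Fin n` fixing the first `k` positions and reversing
the order of the remaining `n - k` positions. -/
def revAfter (n k : ℕ) : Equiv.Perm (Fin n) :=
  Function.Involutive.toPerm
    (fun p => if _h : (p : ℕ) < k then p
      else ⟨n + k - 1 - (p : ℕ), by have := p.isLt; omega⟩)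
    (by
      intro p
      have hp := p.isLt
      by_cases h : (p : ℕ) < k
      · simp [h]
      · have h2 : ¬ (n + k - 1 - (p : ℕ) < k) := by omega
        simp only [dif_neg h, dif_neg h2]
        ext
        simp
        omega)

/-- The antithetic permutation of `σ` relative to a top-`k` partial ranking:
the first `k` positions are unchanged and the remaining positions are
reversed, i.e. `A σ (k+j) = σ (n+1-j)` (in 1-indexed notation). -/
def antithetic (n k : ℕ) (σ : Equiv.Perm (Fin n)) : Equiv.Perm (Fin n) :=
  σ * revAfter n k

lemma neg_type_aux {m : ℕ} (α x : Fin m → ℝ) (hα : ∑ i, α i = 0) :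
    ∑ i, ∑ j, α i * α j * (x i - x j)^2 = -2 * (∑ i, α i * x i)^2 := by
  have h1 : ∀ i, ∑ j, α i * α j * (x i - x j)^2
      = -2 * (α i * x i) * (∑ j, α j * x j) + α i * (∑ j, α j * x j ^ 2) := by
    intro i
    have he : ∀ j, α i * α j * (x i - x j)^2 =
        (α i * x i ^ 2) * α j + (-2 * (α i * x i)) * (α j * x j) + α i * (α j * x j ^ 2) := by
      intro j; ring
    simp_rw [he]
    rw [Finset.sum_add_distrib, Finset.sum_add_distrib, ← Finset.mul_sum, ← Finset.mul_sum,
      ← Finset.mul_sum, hα]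
    ring
  simp_rw [h1]
  rw [Finset.sum_add_distrib, ← Finset.sum_mul, ← Finset.sum_mul]
  have : ∑ i, -2 * (α i * x i) = -2 * ∑ i, α i * x i := by
    rw [← Finset.mul_sum]
  rw [this, hα]
  ring

/-- The Kendall distance on `S_n` is a semimetric of negative type: for every
`m ≥ 2`, permutations `σ_1, …, σ_m` and reals `α_1, …, α_m` summing to zero,
`Σ_{i,j} α_i α_j d(σ_i, σ_j) ≤ 0`. -/
theorem kendallDist_negative_type (n m : ℕ) (hm : 2 ≤ m)
    (σ : Fin m → Equiv.Perm (Fin n)) (α : Fin m → ℝ)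
    (hα : ∑ i, α i = 0) :
    ∑ i, ∑ j, α i * α j * (kendallDist (σ i) (σ j) : ℝ) ≤ 0 := by
  
  classical
  set S : Finset (Fin n × Fin n) := Finset.univ.filter (fun p => p.1 < p.2) with hS
  set b : Equiv.Perm (Fin n) → Fin n × Fin n → ℝ :=
    fun π p => if π⁻¹ p.1 < π⁻¹ p.2 then 1 else 0 with hb
  have hd : ∀ π τ : Equiv.Perm (Fin n),
      (kendallDist π τ : ℝ) = ∑ p ∈ S, (b π p - b τ p)^2 := by
    intro π τ
    rw [kendallDist, ← Finset.filter_filter, ← hS, Finset.card_filter]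
    push_cast
    refine Finset.sum_congr rfl fun p _ => ?_
    by_cases h1 : π⁻¹ p.1 < π⁻¹ p.2 <;> by_cases h2 : τ⁻¹ p.1 < τ⁻¹ p.2 <;>
      (simp only [Equiv.Perm.inv_def] at h1 h2; simp [hb, h1, h2])
  calc ∑ i, ∑ j, α i * α j * (kendallDist (σ i) (σ j) : ℝ)
      = ∑ p ∈ S, ∑ i, ∑ j, α i * α j * (b (σ i) p - b (σ j) p)^2 := by
        simp_rw [hd, Finset.mul_sum]
        rw [show (∑ i, ∑ j, ∑ p ∈ S, α i * α j * (b (σ i) p - b (σ j) p)^2)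
            = ∑ i, ∑ p ∈ S, ∑ j, α i * α j * (b (σ i) p - b (σ j) p)^2 from
          Finset.sum_congr rfl fun i _ => Finset.sum_comm]
        exact Finset.sum_comm
    _ = ∑ p ∈ S, -2 * (∑ i, α i * b (σ i) p)^2 := by
        refine Finset.sum_congr rfl fun p _ => ?_
        exact neg_type_aux α (fun i => b (σ i) p) hα
    _ ≤ 0 := by
        refine Finset.sum_nonpos fun p _ => ?_
        nlinarith [sq_nonneg (∑ i, α i * b (σ i) p)]
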